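/- In a DAG satisfying the global directed Markov property with a d-separation faithful distribution, two distinct vertices A and B are adjacent if and only if A and B are d-connected given every subset of Pa(A)\{B} and every subset of Pa(B)\{A}. -/

import Mathlib

variable {V : Type*}

/-- `x` and `y` are adjacent in the directed graph with edge relation `E`. -/
def GraphAdj (E : V → V → Prop) (x y : V) : Prop := E x y ∨ E y x

/-- The set of parents of `x`. -/
def Parents (E : V → V → Prop) (x : V) : Set V := {p | E p x}

/-- The edge relation `E` is acyclic (no directed cycles, including self-loops). -/
def IsAcyclicRel (E : V → V → Prop) : Prop := ∀ v, ¬ Relation.TransGen E v v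

/-- `A` and `B` are d-connected given `Z`: there is a path (a finite sequence of
distinct vertices joined by edges in either direction) from `A` to `B` such that
every collider on the path is in `Z` or has a descendant in `Z`, and no
non-collider on the path is in `Z`. -/
def DConnected (E : V → V → Prop) (Z : Set V) (A B : V) : Prop :=
  ∃ (n : ℕ) (p : ℕ → V), 0 < n ∧ p 0 = A ∧ p n = B ∧
    (∀ i j, i ≤ n → j ≤ n → p i = p j → i = j) ∧
    (∀ i < n, E (p i) (p (i + 1)) ∨ E (p (i + 1)) (p i)) ∧
    (∀ i, 0 < i → i < n →
      ((E (p (i - 1)) (p i) ∧ E (p (i + 1)) (p i)) →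
        ∃ d, Relation.ReflTransGen E (p i) d ∧ d ∈ Z) ∧
      (¬(E (p (i - 1)) (p i) ∧ E (p (i + 1)) (p i)) → p i ∉ Z))

/-- `A` and `B` are d-separated given `Z`. -/
def DSeparated (E : V → V → Prop) (Z : Set V) (A B : V) : Prop :=
  ¬ DConnected E Z A B

lemma chain_transGen {E : V → V → Prop} {p : ℕ → V} {k : ℕ} (hk : 0 < k)
    (h : ∀ j < k, E (p j) (p (j + 1))) : Relation.TransGen E (p 0) (p k) := by
  induction k with
  | zero => omega
  | succ k ih =>
    rcases Nat.eq_zero_or_pos k with h0 | hp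
    · subst h0; exact Relation.TransGen.single (h 0 (by omega))
    · exact (ih hp (fun j hj => h j (by omega))).tail (h k (by omega))

lemma dconn_symm {E : V → V → Prop} {Z : Set V} {A B : V}
    (h : DConnected E Z A B) : DConnected E Z B A := by
  obtain ⟨n, p, hn, h0, hN, hinj, hed, hcol⟩ := h
  refine ⟨n, fun i => p (n - i), hn, by simp [hN], by simp [h0], ?_, ?_, ?_⟩
  · intro i j hi hj hij
    have := hinj (n - i) (n - j) (Nat.sub_le _ _) (Nat.sub_le _ _) hij
    omega
  · intro i hi
    have h1 : n - i = (n - (i + 1)) + 1 := by omega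
    have := hed (n - (i + 1)) (by omega)
    show E (p (n - i)) (p (n - (i + 1))) ∨ E (p (n - (i + 1))) (p (n - i))
    rw [h1]
    tauto
  · intro i h0i hin
    have e1 : n - (i - 1) = (n - i) + 1 := by omega
    have e2 : n - (i + 1) = n - i - 1 := by omega
    have H := hcol (n - i) (by omega) (by omega)
    show (E (p (n - (i - 1))) (p (n - i)) ∧ E (p (n - (i + 1))) (p (n - i)) → _) ∧
      (¬(E (p (n - (i - 1))) (p (n - i)) ∧ E (p (n - (i + 1))) (p (n - i))) → p (n - i) ∉ Z)
    rw [e1, e2]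
    constructor
    · rintro ⟨ha, hb⟩
      exact H.1 ⟨hb, ha⟩
    · intro hnc
      exact H.2 (fun ⟨ha, hb⟩ => hnc ⟨hb, ha⟩)

lemma key_lemma {E : V → V → Prop} (hacy : IsAcyclicRel E) {A B : V}
    (hnadj : ¬ GraphAdj E A B)
    (h : DConnected E (Parents E A \ {B}) A B) : Relation.TransGen E A B := by
  classical
  obtain ⟨n, p, hn, h0, hN, hinj, hed, hcol⟩ := h
  have hn2 : 2 ≤ n := by
    by_contra h2
    have hn1 : n = 1 := by omega
    subst hn1
    rcases hed 0 (by omega) with hf | hb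
    · exact hnadj (Or.inl (h0 ▸ hN ▸ hf))
    · exact hnadj (Or.inr (h0 ▸ hN ▸ hb))
  rcases hed 0 (by omega) with hf | hb
  · by_cases hall : ∀ j < n, E (p j) (p (j + 1))
    · rw [← h0, ← hN]; exact chain_transGen hn hall
    · push_neg at hall
      obtain ⟨j, hj, hjne⟩ := hall
      have hex : ∃ j, j < n ∧ ¬ E (p j) (p (j + 1)) := ⟨j, hj, hjne⟩
      set i := Nat.find hex with hidef
      have hi := Nat.find_spec hex
      have hipos : 0 < i := by
        rcases Nat.eq_zero_or_pos i with h0' | h'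
        · exact absurd hf (h0' ▸ hi.2)
        · exact h'
      have hfor : ∀ m < i, E (p m) (p (m + 1)) := by
        intro m hm
        have := Nat.find_min hex hm
        push_neg at this
        exact this (by omega)
      have he1 : E (p (i - 1)) (p i) := by
        have := hfor (i - 1) (by omega)
        rwa [Nat.sub_add_cancel hipos] at this
      have he2 : E (p (i + 1)) (p i) := (hed i hi.1).resolve_left hi.2
      obtain ⟨d, hd1, hd2⟩ := (hcol i hipos hi.1).1 ⟨he1, he2⟩
      have hApi : Relation.TransGen E A (p i) := h0 ▸ chain_transGen hipos hfor
      have hdA : E d A := hd2.1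
      exact absurd (hApi.trans (Relation.TransGen.tail' hd1 hdA)) (hacy A)
  · -- E (p 1) (p 0) : p 1 is a parent of A, non-collider, in Z : contradiction
    exfalso
    have notf : ¬ E (p 0) (p 1) := fun hf =>
      hacy (p 0) ((Relation.TransGen.single hf).tail hb)
    have hnc := (hcol 1 one_pos (by omega)).2 (fun hc => notf hc.1)
    apply hnc
    constructor
    · exact h0 ▸ hb
    · simp only [Set.mem_singleton_iff]
      intro hB
      have : (1 : ℕ) = n := hinj 1 n (by omega) le_rfl (by rw [hB, hN])
      omega

/-- In a DAG (with a d-separation faithful Markov distribution, so that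
dependence coincides with d-connection), two distinct vertices `A` and `B` are
adjacent iff they are d-connected given every subset of `Pa(A)\{B}` and every
subset of `Pa(B)\{A}`. -/
theorem adjacent_iff_dconnected_all_parent_subsets [Finite V]
    (E : V → V → Prop) (hacy : IsAcyclicRel E) (A B : V) (hAB : A ≠ B) :
    GraphAdj E A B ↔
      ((∀ Z : Set V, Z ⊆ Parents E A \ {B} → DConnected E Z A B) ∧
       (∀ Z : Set V, Z ⊆ Parents E B \ {A} → DConnected E Z A B)) := by
  classical
  constructor
  · intro hadj
    have conn : ∀ Z : Set V, DConnected E Z A B := by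
      intro Z
      refine ⟨1, fun i => if i = 0 then A else B, one_pos, by simp, by simp, ?_, ?_, ?_⟩
      · intro i j hi hj hij
        interval_cases i <;> interval_cases j <;> simp_all
      · intro i hi
        interval_cases i
        simpa [GraphAdj] using hadj
      · intro i h1 h2
        omega
    exact ⟨fun Z _ => conn Z, fun Z _ => conn Z⟩
  · rintro ⟨h1, h2⟩
    by_contra hnadj
    have t1 : Relation.TransGen E A B :=
      key_lemma hacy hnadj (h1 _ (subset_refl _))
    have hnadj' : ¬ GraphAdj E B A := fun g => hnadj g.symm
    have t2 : Relation.TransGen E B A :=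
      key_lemma hacy hnadj' (dconn_symm (h2 _ (subset_refl _)))
    exact hacy A (t1.trans t2)
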